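/- Let A ∈ ℝ^{m×4} have unit columns, let h_i := (⟨A_{•i}, A_{•1}⟩, ⟨A_{•i}, A_{•2}⟩, ⟨A_{•i}, A_{•3}⟩)ᵀ ∈ ℝ³ for i = 1,…,4, and let H := [h₄+h₁, h₄−h₁, h₄+h₂, h₄−h₂, h₄+h₃, h₄−h₃] ∈ ℝ^{3×6}. Then the following are equivalent: (a) max_{i=1,2,3} |h_iᵀ v| > |h₄ᵀ v| for every v = (v₁,v₂,v₃)ᵀ ∈ ℝ³ with v₁·v₂·v₃ ≠ 0; (b) for every sign vector σ = (σ₁,σ₂,σ₃) ∈ {−1,+1}³, there exist vectors u ∈ ℝ³ with u ≥ 0 and u ≠ 0, and w ∈ ℝ⁶ with w ≥ 0, such that u + D_σ H w = 0, where D_σ := diag(σ₁, σ₂, σ₃) ∈ ℝ^{3×3}. -/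

import Mathlib

open Matrix Set Filter Topology
open scoped RealInnerProductSpace

section Cone

variable {E : Type*} [NormedAddCommGroup E] [InnerProductSpace ℝ E]

/-- The conical hull of finitely many vectors. -/
def coneSet {n : ℕ} (v : Fin n → E) : Set E :=
  {x | ∃ w : Fin n → ℝ, (∀ i, 0 ≤ w i) ∧ x = ∑ i, w i • v i}

lemma coneSet_zero_mem {n : ℕ} (v : Fin n → E) : (0 : E) ∈ coneSet v :=
  ⟨0, fun _ => le_refl _, by simp⟩

lemma coneSet_add {n : ℕ} {v : Fin n → E} {x y : E}
    (hx : x ∈ coneSet v) (hy : y ∈ coneSet v) : x + y ∈ coneSet v := by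
  obtain ⟨w, hw, rfl⟩ := hx
  obtain ⟨w', hw', rfl⟩ := hy
  exact ⟨w + w', fun i => add_nonneg (hw i) (hw' i), by
    simp [add_smul, Finset.sum_add_distrib]⟩

lemma coneSet_smul {n : ℕ} {v : Fin n → E} {x : E} {c : ℝ}
    (hc : 0 ≤ c) (hx : x ∈ coneSet v) : c • x ∈ coneSet v := by
  obtain ⟨w, hw, rfl⟩ := hx
  exact ⟨c • w, fun i => mul_nonneg hc (hw i), by
    simp [Finset.smul_sum, smul_smul]⟩

/-- Decomposition of the cone over `n+1` vectors. -/
lemma coneSet_succ {n : ℕ} (v : Fin (n + 1) → E) (x : E) :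
    x ∈ coneSet v ↔ ∃ s ∈ coneSet (Fin.init v), ∃ t : ℝ, 0 ≤ t ∧ x = s + t • v (Fin.last n) := by
  constructor
  · rintro ⟨w, hw, rfl⟩
    refine ⟨∑ i : Fin n, w i.castSucc • Fin.init v i, ⟨fun i => w i.castSucc, fun i => hw _, rfl⟩,
      w (Fin.last n), hw _, ?_⟩
    rw [Fin.sum_univ_castSucc]
    rfl
  · rintro ⟨s, ⟨w, hw, rfl⟩, t, ht, rfl⟩
    refine ⟨Fin.snoc w t, fun i => ?_, ?_⟩
    · induction i using Fin.lastCases with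
      | last => simp [ht]
      | cast i => simp [hw i]
    · rw [Fin.sum_univ_castSucc]
      simp [Fin.init]

lemma coneSet_map {n : ℕ} (f : E →L[ℝ] E) (v : Fin n → E) :
    coneSet (⇑f ∘ v) = f '' coneSet v := by
  ext x
  constructor
  · rintro ⟨w, hw, rfl⟩
    exact ⟨∑ i, w i • v i, ⟨w, hw, rfl⟩, by simp [map_sum]⟩
  · rintro ⟨y, ⟨w, hw, rfl⟩, rfl⟩
    exact ⟨w, hw, by simp [map_sum]⟩

open scoped RealInnerProductSpace in
/-- Projection annihilating `v`. -/
noncomputable def projAway (v : E) : E →L[ℝ] E :=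
  ContinuousLinearMap.id ℝ E - (innerSL ℝ v).smulRight ((⟪v, v⟫ : ℝ)⁻¹ • v)

open scoped RealInnerProductSpace

lemma projAway_apply (v x : E) :
    projAway v x = x - (⟪v, x⟫ * (⟪v, v⟫ : ℝ)⁻¹) • v := by
  simp [projAway, smul_smul]

lemma projAway_self (v : E) : projAway v v = 0 := by
  rcases eq_or_ne v 0 with rfl | hv
  · simp [projAway_apply]
  · rw [projAway_apply, mul_inv_cancel₀ (inner_self_ne_zero.mpr hv), one_smul, sub_self]

lemma projAway_eq_zero {v y : E} (h : projAway v y = 0) :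
    y = (⟪v, y⟫ * (⟪v, v⟫ : ℝ)⁻¹) • v := by
  rw [projAway_apply, sub_eq_zero] at h
  exact h

theorem isClosed_coneSet : ∀ {n : ℕ} (v : Fin n → E), IsClosed (coneSet v) := by
  intro n
  induction n with
  | zero =>
    intro v
    have : coneSet v = {0} := by
      ext x; simp [coneSet, eq_comm]
    rw [this]; exact isClosed_singleton
  | succ n ih =>
    intro v
    set z := v (Fin.last n) with hz
    by_cases hmz : -z ∈ coneSet (Fin.init v)
    · -- first case: cone is a preimage under `projAway z`
      have hset : coneSet v = (projAway z) ⁻¹' (coneSet (⇑(projAway z) ∘ Fin.init v)) := by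
        ext x
        rw [mem_preimage, coneSet_map]
        constructor
        · intro hx
          rw [coneSet_succ] at hx
          obtain ⟨s, hs, t, ht, rfl⟩ := hx
          refine ⟨s, hs, ?_⟩
          rw [map_add, _root_.map_smul, ← hz, projAway_self, smul_zero, add_zero]
        · rintro ⟨s, hs, hps⟩
          have h0 : projAway z (x - s) = 0 := by rw [map_sub, hps, sub_self]
          have hxs := projAway_eq_zero h0
          set c : ℝ := ⟪z, x - s⟫ * (⟪z, z⟫ : ℝ)⁻¹ with hc
          have hxeq : x = s + c • z := by rw [← hxs]; abel
          rcases le_or_gt 0 c with h0c | h0c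
          · rw [coneSet_succ]
            exact ⟨s, hs, c, h0c, by rw [hxeq, hz]⟩
          · have hxx : x = s + (-c) • (-z) := by
              rw [smul_neg, neg_smul, neg_neg, hxeq]
            rw [coneSet_succ]
            refine ⟨s + (-c) • (-z), coneSet_add hs (coneSet_smul (by linarith) hmz),
              0, le_refl _, by rw [zero_smul, add_zero, hxx]⟩
      rw [hset]
      exact (ih _).preimage (projAway z).continuous
    · -- second case: sequential closedness
      have hzne : z ≠ 0 := by
        intro h0
        rw [h0, neg_zero] at hmz
        exact hmz (coneSet_zero_mem (Fin.init v))
      apply IsSeqClosed.isClosed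
      intro u x hu hx
      choose s hs t ht hust using fun k => (coneSet_succ v (u k)).mp (hu k)
      obtain ⟨X, hX⟩ : ∃ X : ℝ, ∀ k, ‖u k‖ ≤ X := by
        obtain ⟨X, hX⟩ := (hx.norm.bddAbove_range)
        exact ⟨X, fun k => hX ⟨k, rfl⟩⟩
      -- the coefficients t are bounded
      have hbdd : ∃ B : ℝ, ∀ k, t k ≤ B := by
        by_contra hB
        push_neg at hB
        apply hmz
        have hclosed : IsClosed (coneSet (Fin.init v)) := ih _
        rw [← hclosed.closure_eq]
        rw [Metric.mem_closure_iff]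
        intro ε hε
        obtain ⟨k, hk⟩ := hB (max (X / ε) 0)
        have htk : 0 < t k := lt_of_le_of_lt (le_max_right _ _) hk
        refine ⟨(t k)⁻¹ • s k, coneSet_smul (inv_nonneg.mpr htk.le) (hs k), ?_⟩
        have : -z - (t k)⁻¹ • s k = -((t k)⁻¹ • u k) := by
          rw [hust k, smul_add, smul_smul, inv_mul_cancel₀ htk.ne', one_smul]
          abel
        rw [dist_eq_norm, this, norm_neg, norm_smul, Real.norm_eq_abs,
          abs_of_pos (inv_pos.mpr htk)]
        have hXpos : 0 ≤ X := le_trans (norm_nonneg _) (hX 0)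
        have h1 : X / ε < t k := lt_of_le_of_lt (le_max_left _ _) hk
        calc (t k)⁻¹ * ‖u k‖ ≤ (t k)⁻¹ * X := by
              exact mul_le_mul_of_nonneg_left (hX k) (inv_nonneg.mpr htk.le)
          _ < ε := by
              rw [inv_mul_lt_iff₀ htk]
              calc X = (X / ε) * ε := by field_simp
                _ < t k * ε := by exact mul_lt_mul_of_pos_right h1 hε
      obtain ⟨B, hB⟩ := hbdd
      obtain ⟨tl, htl, φ, hφ, hφt⟩ := (isCompact_Icc : IsCompact (Icc (0:ℝ) B)).tendsto_subseq
        (fun k => ⟨ht k, hB k⟩)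
      have hsconv : Tendsto (fun k => s (φ k)) atTop (𝓝 (x - tl • z)) := by
        have : (fun k => s (φ k)) = fun k => u (φ k) - t (φ k) • z := by
          funext k; rw [hust (φ k)]; abel
        rw [this]
        exact ((hx.comp hφ.tendsto_atTop).sub (hφt.smul tendsto_const_nhds))
      have hmem : x - tl • z ∈ coneSet (Fin.init v) :=
        (ih _).mem_of_tendsto hsconv (Eventually.of_forall fun k => hs (φ k))
      rw [coneSet_succ]
      exact ⟨x - tl • z, hmem, tl, htl.1, by rw [← hz]; abel⟩

end Cone

namespace Stmt14

noncomputable abbrev E3 := EuclideanSpace ℝ (Fin 3)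

noncomputable def toE3 (f : Fin 3 → ℝ) : E3 := (WithLp.linearEquiv 2 ℝ (Fin 3 → ℝ)).symm f

@[simp] lemma toE3_apply (f : Fin 3 → ℝ) (k : Fin 3) : toE3 f k = f k := rfl

lemma inner_toE3 (f g : Fin 3 → ℝ) : ⟪toE3 f, toE3 g⟫ = ∑ k, f k * g k := by
  simp [PiLp.inner_apply, toE3]
  exact Finset.sum_congr rfl fun _ _ => mul_comm _ _

/-- Key Farkas-type alternative. -/
theorem farkas_alt (M : Matrix (Fin 3) (Fin 6) ℝ)
    (hM : ¬ ∃ (u : Fin 3 → ℝ) (w : Fin 6 → ℝ),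
      (∀ k, 0 ≤ u k) ∧ u ≠ 0 ∧ (∀ j, 0 ≤ w j) ∧ u + M.mulVec w = 0) :
    ∃ x : Fin 3 → ℝ, (∀ k, 0 < x k) ∧ ∀ j, 0 ≤ ∑ k, M k j * x k := by
  by_contra hcon
  push_neg at hcon
  set cols : Fin 6 → E3 := fun j => toE3 (fun k => M k j) with hcols
  set K : ConvexCone ℝ E3 :=
    { carrier := coneSet cols
      smul_mem' := fun c hc x hx => coneSet_smul hc.le hx
      add_mem' := fun x hx y hy => coneSet_add hx hy } with hK
  have hKset : (K : Set E3) = coneSet cols := rfl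
  have hcolsK : ∀ j, cols j ∈ coneSet cols := by
    intro j
    exact ⟨Pi.single j 1, fun i => by
      classical
      by_cases h : i = j <;> simp [Pi.single_apply, h], by
      simp [Pi.single_apply, ite_smul]⟩
  -- the dual cone
  set Kd : Set E3 := ((ProperCone.innerDual (K : Set E3)) : Set E3) with hKd
  have hmemKd : ∀ y : E3, y ∈ Kd ↔ ∀ x ∈ (K : Set E3), 0 ≤ ⟪x, y⟫ := fun y => ProperCone.mem_innerDual
  -- the open positive orthant
  set P : Set E3 := {x : E3 | ∀ k, 0 < x k} with hP
  have hPopen : IsOpen P := by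
    have : P = ⋂ k : Fin 3, (EuclideanSpace.proj k : E3 →L[ℝ] ℝ) ⁻¹' (Ioi 0) := by
      ext x; simp [hP, EuclideanSpace.proj]
    rw [this]
    exact isOpen_iInter_of_finite fun k =>
      (isOpen_Ioi).preimage (EuclideanSpace.proj k).continuous
  have hPconv : Convex ℝ P := by
    intro x hx y hy a b ha hb hab
    intro k
    have hk : (a • x + b • y) k = a * x k + b * y k := by
      simp [PiLp.add_apply, PiLp.smul_apply, smul_eq_mul]
    rw [hk]
    rcases eq_or_lt_of_le ha with rfl | ha'
    · simp only [zero_mul, zero_add]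
      have hb1 : b = 1 := by linarith
      rw [hb1, one_mul]; exact hy k
    · have h1 : 0 < a * x k := mul_pos ha' (hx k)
      have h2 : 0 ≤ b * y k := mul_nonneg hb (hy k).le
      linarith
  -- disjointness of P and the dual cone
  have hdisj : Disjoint P Kd := by
    rw [Set.disjoint_left]
    intro x hxP hxKd
    obtain ⟨j, hj⟩ := hcon (fun k => x k) hxP
    have := (hmemKd x).mp hxKd (cols j) (hcolsK j)
    rw [hcols] at this
    have hxx : (⟪toE3 (fun k => M k j), x⟫ : ℝ) = ∑ k, M k j * x k := by
      simp [PiLp.inner_apply]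
      exact Finset.sum_congr rfl fun _ _ => mul_comm _ _
    rw [hxx] at this
    exact absurd this (not_le.mpr hj)
  -- separation
  obtain ⟨f, α, hfP, hfKd⟩ := geometric_hahn_banach_open hPconv hPopen
    ((ProperCone.innerDual (K : Set E3)).convex) hdisj
  have h0Kd : (0 : E3) ∈ Kd := by
    rw [hmemKd]; intro x _; simp
  have hα0 : α ≤ 0 := by simpa using hfKd 0 h0Kd
  -- f is nonnegative on Kd
  have hfnn : ∀ y ∈ Kd, 0 ≤ f y := by
    intro y hy
    by_contra hneg
    push_neg at hneg
    have hpos : 0 < (α - 1) / f y := by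
      rw [div_pos_iff]
      right; exact ⟨by linarith, hneg⟩
    have hscale : ((α - 1) / f y) • y ∈ Kd :=
      (ProperCone.innerDual (K : Set E3)).smul_mem hy hpos.le
    have := hfKd _ hscale
    rw [ContinuousLinearMap.map_smul, smul_eq_mul, div_mul_cancel₀ _ hneg.ne] at this
    linarith
  -- representing vector
  set c : E3 := (InnerProductSpace.toDual ℝ E3).symm f with hc
  have hfc : ∀ y : E3, ⟪c, y⟫ = f y := fun y => InnerProductSpace.toDual_symm_apply
  -- the all-ones vector
  set one3 : E3 := toE3 (fun _ => 1) with hone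
  have hone3P : one3 ∈ P := fun k => by rw [hone, toE3_apply]; norm_num
  have ht : (⟪c, one3⟫ : ℝ) < α := by rw [hfc]; exact hfP _ hone3P
  have hTneg : (⟪c, one3⟫ : ℝ) < 0 := lt_of_lt_of_le ht hα0
  -- coordinates of c are ≤ α
  have hcle : ∀ k, c k ≤ α := by
    intro k
    by_contra hk
    push_neg at hk
    set T : ℝ := ⟪c, one3⟫ with hT
    set ε : ℝ := (c k - α) / (-T) with hε
    have hεpos : 0 < ε := div_pos (by linarith) (by linarith)
    have hmem : EuclideanSpace.single k (1:ℝ) + ε • one3 ∈ P := by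
      intro k'
      have h1 : (EuclideanSpace.single k (1:ℝ) + ε • one3) k'
          = EuclideanSpace.single k (1:ℝ) k' + ε * one3 k' := rfl
      rw [hP] at *
      show 0 < (EuclideanSpace.single k (1:ℝ) + ε • one3) k'
      rw [h1, EuclideanSpace.single_apply, hone, toE3_apply]
      by_cases hkk : k' = k <;> simp [hkk] <;> linarith
    have hlt := hfP _ hmem
    rw [← hfc, inner_add_right, real_inner_smul_right,
      EuclideanSpace.inner_single_right] at hlt
    simp only [starRingEnd_apply, star_trivial, one_mul] at hlt
    have hTne : T ≠ 0 := by linarith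
    have hεT : ε * T = -(c k - α) := by
      have h2 : T / -T = -1 := by rw [div_neg, div_self hTne]
      calc ε * T = (c k - α) * (T / -T) := by rw [hε]; ring
        _ = -(c k - α) := by rw [h2]; ring
    rw [← hT] at hlt
    linarith
  -- c lies in the double dual cone = K
  have hcK : c ∈ (K : Set E3) := by
    have hdd : ((ProperCone.innerDual ((ProperCone.innerDual (K : Set E3)) : Set E3)) : Set E3)
        = (K : Set E3) := by
      obtain ⟨C, hC⟩ := ConvexCone.canLift.prf K
        ⟨⟨0, coneSet_zero_mem cols⟩, ((isClosed_coneSet cols : IsClosed (coneSet cols)))⟩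
      have hCK : (C : Set E3) = (K : Set E3) := by rw [← hC]; rfl
      rw [← hCK, ProperCone.innerDual_innerDual]
    rw [← hdd, SetLike.mem_coe, ProperCone.mem_innerDual]
    intro y hy
    rw [real_inner_comm, hfc]
    exact hfnn y hy
  -- derive contradiction with hM
  obtain ⟨w, hw, hcw⟩ := hcK
  apply hM
  refine ⟨fun k => -(c k), w, fun k => neg_nonneg.mpr (le_trans (hcle k) hα0), ?_, hw, ?_⟩
  · -- u ≠ 0 : some coordinate of c is negative
    have hsum : ∑ k, c k < 0 := by
      have hco : (⟪c, one3⟫ : ℝ) = ∑ k, c k := by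
        rw [hone]
        simp [PiLp.inner_apply, toE3]
      rw [← hco]; linarith
    intro h0
    have : ∀ k, c k = 0 := by
      intro k
      have := congrFun h0 k
      simpa [neg_eq_zero] using this
    rw [Finset.sum_congr rfl (fun k _ => this k)] at hsum
    simp at hsum
  · -- u + M w = 0
    funext k
    have hck : c k = ∑ j, w j * M k j := by
      have : (WithLp.linearEquiv 2 ℝ (Fin 3 → ℝ)) c
          = ∑ j, w j • (fun k => M k j) := by
        rw [hcw, map_sum]
        simp [cols, toE3]
      have := congrFun this k
      simpa [Finset.sum_apply] using this
    simp only [Pi.add_apply, Pi.zero_apply, mulVec, dotProduct]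
    rw [hck]
    have : ∑ j, M k j * w j = ∑ j, w j * M k j := by
      apply Finset.sum_congr rfl; intros; ring
    rw [this]; ring

end Stmt14

/-- Equivalence between the strict-dominance property (𝐏) and the family of linear
feasibility conditions from Motzkin's transposition theorem (Lemma 5.4 of the paper).
Here `h i = (⟨A_{•i}, A_{•1}⟩, ⟨A_{•i}, A_{•2}⟩, ⟨A_{•i}, A_{•3}⟩)` for `i = 1,…,4`
(0-indexed), and `H = [h₄+h₁, h₄−h₁, h₄+h₂, h₄−h₂, h₄+h₃, h₄−h₃]`. -/
theorem stmt_14 {m : ℕ} (A : Matrix (Fin m) (Fin 4) ℝ)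
    (hunit : ∀ i : Fin 4, ∑ k, A k i ^ 2 = 1)
    (h : Fin 4 → Fin 3 → ℝ)
    (hh : ∀ (i : Fin 4) (k : Fin 3), h i k = (fun l => A l i) ⬝ᵥ (fun l => A l k.castSucc))
    (H : Matrix (Fin 3) (Fin 6) ℝ)
    (hH : ∀ k : Fin 3,
      H k 0 = h 3 k + h 0 k ∧ H k 1 = h 3 k - h 0 k ∧
      H k 2 = h 3 k + h 1 k ∧ H k 3 = h 3 k - h 1 k ∧
      H k 4 = h 3 k + h 2 k ∧ H k 5 = h 3 k - h 2 k) :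
    ((∀ v : Fin 3 → ℝ, v 0 * v 1 * v 2 ≠ 0 →
        |h 3 ⬝ᵥ v| < max (|h 0 ⬝ᵥ v|) (max (|h 1 ⬝ᵥ v|) (|h 2 ⬝ᵥ v|))) ↔
      (∀ σ : Fin 3 → ℝ, (∀ k, σ k = 1 ∨ σ k = -1) →
        ∃ (u : Fin 3 → ℝ) (w : Fin 6 → ℝ),
          (∀ k, 0 ≤ u k) ∧ u ≠ 0 ∧ (∀ j, 0 ≤ w j) ∧
          u + (Matrix.diagonal σ).mulVec (H.mulVec w) = 0)) := by
  -- expansion of a column sum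
  have hcol : ∀ (y : Fin 3 → ℝ) (j : Fin 6) (a : Fin 4) (sgn : ℝ),
      (∀ k, H k j = h 3 k + sgn * h a k) →
      ∑ k, H k j * y k = h 3 ⬝ᵥ y + sgn * (h a ⬝ᵥ y) := by
    intro y j a sgn hcols
    simp only [dotProduct, Finset.mul_sum, ← Finset.sum_add_distrib]
    apply Finset.sum_congr rfl
    intro k _
    rw [hcols k]
    ring
  have hc0 : ∀ k, H k 0 = h 3 k + 1 * h 0 k := fun k => by rw [(hH k).1]; ring
  have hc1 : ∀ k, H k 1 = h 3 k + (-1) * h 0 k := fun k => by rw [(hH k).2.1]; ring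
  have hc2 : ∀ k, H k 2 = h 3 k + 1 * h 1 k := fun k => by rw [(hH k).2.2.1]; ring
  have hc3 : ∀ k, H k 3 = h 3 k + (-1) * h 1 k := fun k => by rw [(hH k).2.2.2.1]; ring
  have hc4 : ∀ k, H k 4 = h 3 k + 1 * h 2 k := fun k => by rw [(hH k).2.2.2.2.1]; ring
  have hc5 : ∀ k, H k 5 = h 3 k + (-1) * h 2 k := fun k => by rw [(hH k).2.2.2.2.2]; ring
  constructor
  · -- (a) → (b)
    intro ha σ hσ
    by_contra hb
    have hσne : ∀ k, σ k ≠ 0 := fun k => by rcases hσ k with h1 | h1 <;> rw [h1] <;> norm_num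
    -- reformulate hb for farkas_alt
    set M : Matrix (Fin 3) (Fin 6) ℝ := fun k j => σ k * H k j with hM
    have hMeq : ∀ w : Fin 6 → ℝ, M.mulVec w = (Matrix.diagonal σ).mulVec (H.mulVec w) := by
      intro w
      funext k
      rw [Matrix.mulVec_diagonal]
      simp only [Matrix.mulVec, dotProduct, hM]
      rw [Finset.mul_sum]
      apply Finset.sum_congr rfl
      intro j _
      ring
    obtain ⟨x, hxpos, hxdual⟩ := Stmt14.farkas_alt M (by
      intro ⟨u, w, h1, h2, h3', h4⟩
      exact hb ⟨u, w, h1, h2, h3', by rw [← hMeq]; exact h4⟩)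
    set v : Fin 3 → ℝ := fun k => σ k * x k with hv
    have hvne : v 0 * v 1 * v 2 ≠ 0 := by
      apply mul_ne_zero
      apply mul_ne_zero
      all_goals exact mul_ne_zero (hσne _) (ne_of_gt (hxpos _))
    have key : ∀ j : Fin 6, 0 ≤ ∑ k, H k j * v k := by
      intro j
      have := hxdual j
      have heq : ∑ k, M k j * x k = ∑ k, H k j * v k := by
        apply Finset.sum_congr rfl
        intro k _
        simp only [hM, hv]
        ring
      linarith [heq ▸ this]
    have k0 := key 0; have k1 := key 1; have k2 := key 2
    have k3 := key 3; have k4 := key 4; have k5 := key 5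
    rw [hcol v 0 0 1 hc0] at k0; rw [hcol v 1 0 (-1) hc1] at k1
    rw [hcol v 2 1 1 hc2] at k2; rw [hcol v 3 1 (-1) hc3] at k3
    rw [hcol v 4 2 1 hc4] at k4; rw [hcol v 5 2 (-1) hc5] at k5
    have habs0 : |h 0 ⬝ᵥ v| ≤ h 3 ⬝ᵥ v := abs_le.mpr ⟨by linarith, by linarith⟩
    have habs1 : |h 1 ⬝ᵥ v| ≤ h 3 ⬝ᵥ v := abs_le.mpr ⟨by linarith, by linarith⟩
    have habs2 : |h 2 ⬝ᵥ v| ≤ h 3 ⬝ᵥ v := abs_le.mpr ⟨by linarith, by linarith⟩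
    have := ha v hvne
    have hle3 := le_abs_self (h 3 ⬝ᵥ v)
    rcases lt_max_iff.mp this with hlt | hlt
    · linarith
    · rcases lt_max_iff.mp hlt with hlt' | hlt' <;> linarith
  · -- (b) → (a)
    intro hb v hvne
    by_contra hle
    push_neg at hle
    have hv0 : v 0 ≠ 0 := fun h0 => hvne (by rw [h0]; ring)
    have hv1 : v 1 ≠ 0 := fun h0 => hvne (by rw [h0]; ring)
    have hv2 : v 2 ≠ 0 := fun h0 => hvne (by rw [h0]; ring)
    set s : ℝ := if 0 ≤ h 3 ⬝ᵥ v then 1 else -1 with hs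
    have hsne : s ≠ 0 := by rw [hs]; split <;> norm_num
    set v' : Fin 3 → ℝ := fun k => s * v k with hv'
    have hdots : ∀ i : Fin 4, h i ⬝ᵥ v' = s * (h i ⬝ᵥ v) := by
      intro i
      simp only [dotProduct, hv', Finset.mul_sum]
      apply Finset.sum_congr rfl
      intro k _
      ring
    have h3v' : h 3 ⬝ᵥ v' = |h 3 ⬝ᵥ v| := by
      rw [hdots, hs]
      split
      · rw [one_mul, abs_of_nonneg (by assumption)]
      · rw [abs_of_neg (by linarith [not_le.mp (by assumption)]), neg_one_mul]
    have hvk' : ∀ k, v' k ≠ 0 := by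
      intro k
      apply mul_ne_zero hsne
      fin_cases k <;> assumption
    have maxs := hle
    rw [max_le_iff, max_le_iff] at maxs
    obtain ⟨m0, m1, m2⟩ := maxs
    have habs : ∀ i : Fin 3, |h i.castSucc ⬝ᵥ v'| ≤ h 3 ⬝ᵥ v' := by
      intro i
      rw [h3v', hdots, abs_mul]
      have : |s| = 1 := by rw [hs]; split <;> norm_num
      rw [this, one_mul]
      fin_cases i
      · exact m0
      · exact m1
      · exact m2
    have hb0 := abs_le.mp (habs 0)
    have hb1 := abs_le.mp (habs 1)
    have hb2 := abs_le.mp (habs 2)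
    simp only [show (Fin.castSucc (0 : Fin 3)) = (0 : Fin 4) from rfl,
      show (Fin.castSucc (1 : Fin 3)) = (1 : Fin 4) from rfl,
      show (Fin.castSucc (2 : Fin 3)) = (2 : Fin 4) from rfl] at hb0 hb1 hb2
    have d0 : 0 ≤ ∑ k, H k 0 * v' k := by rw [hcol v' 0 0 1 hc0]; linarith [hb0.1, hb0.2]
    have d1 : 0 ≤ ∑ k, H k 1 * v' k := by rw [hcol v' 1 0 (-1) hc1]; linarith [hb0.1, hb0.2]
    have d2 : 0 ≤ ∑ k, H k 2 * v' k := by rw [hcol v' 2 1 1 hc2]; linarith [hb1.1, hb1.2]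
    have d3 : 0 ≤ ∑ k, H k 3 * v' k := by rw [hcol v' 3 1 (-1) hc3]; linarith [hb1.1, hb1.2]
    have d4 : 0 ≤ ∑ k, H k 4 * v' k := by rw [hcol v' 4 2 1 hc4]; linarith [hb2.1, hb2.2]
    have d5 : 0 ≤ ∑ k, H k 5 * v' k := by rw [hcol v' 5 2 (-1) hc5]; linarith [hb2.1, hb2.2]
    -- the sign vector
    set σ : Fin 3 → ℝ := fun k => if 0 ≤ v' k then 1 else -1 with hσ
    have hσpm : ∀ k, σ k = 1 ∨ σ k = -1 := by
      intro k; rw [hσ]; dsimp only; split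
      · exact Or.inl rfl
      · exact Or.inr rfl
    obtain ⟨u, w, hu, hune, hw, heq⟩ := hb σ hσpm
    set x : Fin 3 → ℝ := fun k => σ k * v' k with hx
    have hxpos : ∀ k, 0 < x k := by
      intro k
      rw [hx, hσ]; dsimp only
      rcases lt_trichotomy (v' k) 0 with hlt | hzero | hgt
      · rw [if_neg (not_le.mpr hlt)]; nlinarith
      · exact absurd hzero (hvk' k)
      · rw [if_pos hgt.le, one_mul]; exact hgt
    have hσsq : ∀ k, σ k * σ k = 1 := by
      intro k; rcases hσpm k with h1 | h1 <;> rw [h1] <;> norm_num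
    -- take the inner product of the equation with x
    have hzero : ∑ k, x k * (u k + (Matrix.diagonal σ).mulVec (H.mulVec w) k) = 0 := by
      rw [Finset.sum_eq_zero]
      intro k _
      have := congrFun heq k
      simp only [Pi.add_apply, Pi.zero_apply] at this
      rw [this, mul_zero]
    have hsplit : ∑ k, x k * (u k + (Matrix.diagonal σ).mulVec (H.mulVec w) k)
        = (∑ k, x k * u k) + ∑ k, x k * (Matrix.diagonal σ).mulVec (H.mulVec w) k := by
      rw [← Finset.sum_add_distrib]
      apply Finset.sum_congr rfl
      intro k _
      ring
    have hpos : 0 < ∑ k, x k * u k := by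
      obtain ⟨k0, hk0⟩ := Function.ne_iff.mp hune
      apply Finset.sum_pos'
      · intro k _
        exact mul_nonneg (hxpos k).le (hu k)
      · exact ⟨k0, Finset.mem_univ _, mul_pos (hxpos k0) (lt_of_le_of_ne (hu k0) (Ne.symm hk0))⟩
    have hnn : 0 ≤ ∑ k, x k * (Matrix.diagonal σ).mulVec (H.mulVec w) k := by
      have step : ∀ k, x k * (Matrix.diagonal σ).mulVec (H.mulVec w) k
          = v' k * (H.mulVec w) k := by
        intro k
        rw [Matrix.mulVec_diagonal, hx]
        calc (fun k => σ k * v' k) k * (σ k * (H.mulVec w) k)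
            = (σ k * σ k) * (v' k * (H.mulVec w) k) := by ring
          _ = v' k * (H.mulVec w) k := by rw [hσsq k, one_mul]
      rw [Finset.sum_congr rfl (fun k _ => step k)]
      have swap : ∑ k, v' k * (H.mulVec w) k = ∑ j, w j * ∑ k, H k j * v' k := by
        simp only [Matrix.mulVec, dotProduct, Finset.mul_sum]
        rw [Finset.sum_comm]
        apply Finset.sum_congr rfl
        intro j _
        apply Finset.sum_congr rfl
        intro k _
        ring
      rw [swap, Fin.sum_univ_six]
      have t0 := mul_nonneg (hw 0) d0
      have t1 := mul_nonneg (hw 1) d1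
      have t2 := mul_nonneg (hw 2) d2
      have t3 := mul_nonneg (hw 3) d3
      have t4 := mul_nonneg (hw 4) d4
      have t5 := mul_nonneg (hw 5) d5
      linarith
    rw [hsplit] at hzero
    linarith
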